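/- Let f : ℝ → ℝ be a twice continuously differentiable solution on [0, h₁] of f''(x) + q(x) f(g(x)) + μ² f(x) = 0, where g(x) = x - Δ(x) maps [0, h₁] into [0, h₁], with f(0) = 1 and f'(0) = -μ. Then for all x ∈ [0, h₁]: f(x) = -sin(μx) + cos(μx) - (1/μ) ∫₀^x q(τ) sin(μ(x - τ)) f(g(τ)) dτ, assuming μ ≠ 0. -/

import Mathlib

open Set intervalIntegral

theorem stmt_7 (h₁ μ : ℝ) (q Δ f f' f'' : ℝ → ℝ)
    (hh₁ : 0 < h₁) (hμ : μ ≠ 0)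
    (hqcont : ContinuousOn q (Set.Icc 0 h₁))
    (hf'cont : ContinuousOn f'' (Set.Icc 0 h₁))
    (hd1 : ∀ x ∈ Set.Icc (0:ℝ) h₁, HasDerivAt f (f' x) x)
    (hd2 : ∀ x ∈ Set.Icc (0:ℝ) h₁, HasDerivAt f' (f'' x) x)
    (hg : ∀ x ∈ Set.Icc (0:ℝ) h₁, x - Δ x ∈ Set.Icc (0:ℝ) h₁)
    (hode : ∀ x ∈ Set.Icc (0:ℝ) h₁,
      f'' x + q x * f (x - Δ x) + μ ^ 2 * f x = 0)
    (hf0 : f 0 = 1) (hf'0 : f' 0 = -μ) :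
    ∀ x ∈ Set.Icc (0:ℝ) h₁,
      f x = -Real.sin (μ * x) + Real.cos (μ * x)
        - (1 / μ) * ∫ τ in (0:ℝ)..x,
            q τ * Real.sin (μ * (x - τ)) * f (τ - Δ τ) := by
  intro x hx
  obtain ⟨hx0, hxh⟩ := hx
  set s : ℝ → ℝ := fun t => f'' t + μ ^ 2 * f t with hs
  have hsub : Icc (0:ℝ) x ⊆ Icc 0 h₁ := Icc_subset_Icc le_rfl hxh
  have huIcc : uIcc (0:ℝ) x = Icc 0 x := uIcc_of_le hx0
  have hsubu : uIcc (0:ℝ) x ⊆ Icc 0 h₁ := huIcc ▸ hsub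
  have hfc : ContinuousOn f (Icc 0 h₁) := fun t ht =>
    (hd1 t ht).continuousAt.continuousWithinAt
  have hsc : ContinuousOn s (Icc 0 h₁) := hf'cont.add (continuousOn_const.mul hfc)
  have hscx : ContinuousOn s (uIcc (0:ℝ) x) := hsc.mono hsubu
  have hlin : ∀ t : ℝ, HasDerivAt (fun t : ℝ => μ * t) μ t := by
    intro t; simpa using (hasDerivAt_id t).const_mul μ
  have hsin : ∀ t : ℝ, HasDerivAt (fun t => Real.sin (μ * t)) (Real.cos (μ * t) * μ) t :=
    fun t => (Real.hasDerivAt_sin (μ * t)).comp t (hlin t)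
  have hcos : ∀ t : ℝ, HasDerivAt (fun t => Real.cos (μ * t)) (-Real.sin (μ * t) * μ) t :=
    fun t => (Real.hasDerivAt_cos (μ * t)).comp t (hlin t)
  -- FTC for φ(t) = f' t * sin(μ t) - μ * (f t * cos(μ t))
  have hφ : ∫ t in (0:ℝ)..x, s t * Real.sin (μ * t)
      = (f' x * Real.sin (μ * x) - μ * (f x * Real.cos (μ * x)))
        - (f' 0 * Real.sin (μ * 0) - μ * (f 0 * Real.cos (μ * 0))) := by
    apply intervalIntegral.integral_eq_sub_of_hasDerivAt
    · intro t ht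
      have ht' : t ∈ Icc (0:ℝ) h₁ := hsubu ht
      have h := ((hd2 t ht').mul (hsin t)).sub (((hd1 t ht').mul (hcos t)).const_mul μ)
      convert h using 1
      rfl
      simp only [hs]; ring
    · exact (hscx.mul ((Real.continuous_sin.comp
        (continuous_const.mul continuous_id)).continuousOn)).intervalIntegrable
  -- FTC for ψ(t) = f' t * cos(μ t) + μ * (f t * sin(μ t))
  have hψ : ∫ t in (0:ℝ)..x, s t * Real.cos (μ * t)
      = (f' x * Real.cos (μ * x) + μ * (f x * Real.sin (μ * x)))
        - (f' 0 * Real.cos (μ * 0) + μ * (f 0 * Real.sin (μ * 0))) := by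
    apply intervalIntegral.integral_eq_sub_of_hasDerivAt
    · intro t ht
      have ht' : t ∈ Icc (0:ℝ) h₁ := hsubu ht
      have h := ((hd2 t ht').mul (hcos t)).add (((hd1 t ht').mul (hsin t)).const_mul μ)
      convert h using 1
      rfl
      simp only [hs]; ring
    · exact (hscx.mul ((Real.continuous_cos.comp
        (continuous_const.mul continuous_id)).continuousOn)).intervalIntegrable
  -- rewrite the integral
  have hIeq : ∫ τ in (0:ℝ)..x, q τ * Real.sin (μ * (x - τ)) * f (τ - Δ τ)
      = ∫ τ in (0:ℝ)..x,
          (Real.cos (μ * x) * (s τ * Real.sin (μ * τ))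
            - Real.sin (μ * x) * (s τ * Real.cos (μ * τ))) := by
    apply intervalIntegral.integral_congr
    intro τ hτ
    have hτ' : τ ∈ Icc (0:ℝ) h₁ := hsubu hτ
    have hode' := hode τ hτ'
    have hq : q τ * f (τ - Δ τ) = -(s τ) := by simp only [hs]; linarith
    have hexp : Real.sin (μ * (x - τ))
        = Real.sin (μ * x) * Real.cos (μ * τ) - Real.cos (μ * x) * Real.sin (μ * τ) := by
      rw [mul_sub, Real.sin_sub]
    calc q τ * Real.sin (μ * (x - τ)) * f (τ - Δ τ)
        = (q τ * f (τ - Δ τ)) * Real.sin (μ * (x - τ)) := by ring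
      _ = _ := by rw [hq, hexp]; ring
  have hint1 : IntervalIntegrable (fun τ => Real.cos (μ * x) * (s τ * Real.sin (μ * τ)))
      MeasureTheory.volume 0 x :=
    ((continuousOn_const.mul (hscx.mul ((Real.continuous_sin.comp
      (continuous_const.mul continuous_id)).continuousOn)))).intervalIntegrable
  have hint2 : IntervalIntegrable (fun τ => Real.sin (μ * x) * (s τ * Real.cos (μ * τ)))
      MeasureTheory.volume 0 x :=
    ((continuousOn_const.mul (hscx.mul ((Real.continuous_cos.comp
      (continuous_const.mul continuous_id)).continuousOn)))).intervalIntegrable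
  rw [hIeq, intervalIntegral.integral_sub hint1 hint2,
    intervalIntegral.integral_const_mul, intervalIntegral.integral_const_mul, hφ, hψ]
  simp only [mul_zero, Real.sin_zero, Real.cos_zero, hf0, hf'0]
  have hpy := Real.sin_sq_add_cos_sq (μ * x)
  field_simp
  linear_combination (-(μ * f x)) * hpy
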